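/- In a level-aware conflict graph, the set of UIPs for the conflict decision level is totally ordered by reachability: for any two distinct UIPs u and v, either u is reachable from v or v is reachable from u. -/

import Mathlib

inductive Lit (V : Type) where
  | pos : V → Lit V
  | neg : V → Lit V
deriving DecidableEq

def Lit.compl {V : Type} : Lit V → Lit V
  | .pos v => .neg v
  | .neg v => .pos v

/-- `l` is a (directed) path from `a` to `b` along the edge relation `E`. -/
def IsPath {α : Type} (E : α → α → Prop) (l : List α) (a b : α) : Prop :=
  l.Chain' E ∧ l.head? = some a ∧ l.getLast? = some b

/-- A UIP for the conflict level: a node through which every path from the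
decision literal `σd` to a conflicting literal passes. -/
def IsUIP {V : Type} (nodes : Finset (Lit V)) (E : Lit V → Lit V → Prop)
    (σ σd u : Lit V) : Prop :=
  u ∈ nodes ∧
  ∀ (l : List (Lit V)) (c : Lit V), (c = σ ∨ c = Lit.compl σ) →
    IsPath E l σd c → u ∈ l


lemma path_of_rtg {α : Type} {E : α → α → Prop} {a b : α}
    (h : Relation.ReflTransGen E a b) :
    ∃ l : List α, l.Chain' E ∧ l.head? = some a ∧ l.getLast? = some b := by
  induction h with
  | refl => exact ⟨[a], by unfold List.Chain'; simp⟩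
  | @tail b c _ hbc ih =>
    obtain ⟨l, hc, hh, hl⟩ := ih
    refine ⟨l ++ [c], ?_, ?_, ?_⟩
    · unfold List.Chain'; rw [List.isChain_append]
      refine ⟨hc, List.isChain_singleton _, ?_⟩
      intro x hx y hy
      simp at hy
      rw [hl] at hx; simp at hx; subst hx; subst hy; exact hbc
    · cases l with
      | nil => simp at hh
      | cons x xs => simpa using hh
    · simp
  
lemma chain'_transGen {α : Type} {E : α → α → Prop} {l : List α} (h : l.Chain' E) :
    ∀ i j (hij : i < j) (hj : j < l.length),
      Relation.TransGen E (l.get ⟨i, by omega⟩) (l.get ⟨j, hj⟩) := by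
  intro i j hij hj
  induction j with
  | zero => omega
  | succ n ih =>
    have hstep : E (l.get ⟨n, by omega⟩) (l.get ⟨n+1, hj⟩) :=
      List.isChain_iff_getElem.mp h n (by omega)
    rcases Nat.lt_succ_iff_lt_or_eq.mp hij with h1 | h1
    · exact (ih h1 (by omega)).tail hstep
    · subst h1; exact .single hstep

/-- in a finite level-aware conflict graph, the UIPs of the
conflict decision level are totally ordered by reachability: for distinct
UIPs `u` and `v`, one is reachable from the other.
 -/
theorem stmt13 {V : Type} [DecidableEq V]
    (nodes : Finset (Lit V)) (E : Lit V → Lit V → Prop) (dl : Lit V → ℕ)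
    (σ σd : Lit V)
    (hσ : σ ∈ nodes) (hσc : σ.compl ∈ nodes) (hσd : σd ∈ nodes)
    (hE : ∀ a b, E a b → a ∈ nodes ∧ b ∈ nodes)
    (hacyc : ∀ a, ¬ Relation.TransGen E a a)
    (hdlσd : dl σd = dl σ) (hdlσc : dl σ.compl = dl σ)
    (hσne : σ ≠ σd) (hσcne : σ.compl ≠ σd)
    (hdec : ∀ a, ¬ E a σd)
    -- level-awareness
    (hla : (∃ p, E p σ ∧ dl p = dl σ) ∧ (∃ p, E p σ.compl ∧ dl p = dl σ))
    -- both conflicting literals are reachable from the decision literal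
    (hreach : Relation.ReflTransGen E σd σ ∧ Relation.ReflTransGen E σd σ.compl) :
    ∀ u v : Lit V, IsUIP nodes E σ σd u → IsUIP nodes E σ σd v → u ≠ v →
      Relation.TransGen E u v ∨ Relation.TransGen E v u := by
  intro u v hu hv huv
  obtain ⟨l, hc, hh, hl⟩ := path_of_rtg hreach.1
  have hul : u ∈ l := hu.2 l σ (Or.inl rfl) ⟨hc, hh, hl⟩
  have hvl : v ∈ l := hv.2 l σ (Or.inl rfl) ⟨hc, hh, hl⟩
  obtain ⟨i, hi, hiu⟩ := List.mem_iff_get.mp hul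
  obtain ⟨j, hj, hjv⟩ := List.mem_iff_get.mp hvl
  rcases lt_trichotomy (i : ℕ) (j : ℕ) with h | h | h
  · left
    simpa using chain'_transGen hc i j h j.isLt
  · exact absurd (congrArg l.get (Fin.ext h)) huv
  · right
    simpa using chain'_transGen hc j i h i.isLt
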